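/- Let a₁,…,a_m ≥ 0 be reals and d₁,…,d_m positive integers, and for S ⊆ [m] let d_S = Σ_{i∈S} d_i. Then Σ_{i=1}^m d_i a_i ≤ 4⌈log₂(2 d_{[m]})⌉ · max over S ⊆ [m] of d_S · (∏_{i∈S} a_i^{d_i})^{1/d_S}. -/

import Mathlib

open Real Finset

/-- Reverse AM-GM: `Σᵢ dᵢaᵢ ≤ 4⌈log₂(2 d_{[m]})⌉ · max_{S⊆[m]} d_S (∏_{i∈S} aᵢ^{dᵢ})^{1/d_S}`. -/
theorem stmt6 {m : ℕ} (a : Fin m → ℝ) (ha : ∀ i, 0 ≤ a i)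
    (d : Fin m → ℕ) (hd : ∀ i, 0 < d i) :
    ∑ i, (d i : ℝ) * a i ≤
      4 * (⌈Real.logb 2 (2 * ∑ i, (d i : ℝ))⌉ : ℝ) *
        (Finset.univ.powerset).sup' ⟨∅, Finset.empty_mem_powerset _⟩
          (fun S : Finset (Fin m) =>
            (∑ i ∈ S, (d i : ℝ)) *
              (∏ i ∈ S, a i ^ d i) ^ ((∑ i ∈ S, (d i : ℝ))⁻¹)) := by
  classical
  rcases Nat.eq_zero_or_pos m with hm | hm
  · subst hm; simp
  set f : Finset (Fin m) → ℝ := fun S =>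
    (∑ i ∈ S, (d i : ℝ)) * (∏ i ∈ S, a i ^ d i) ^ ((∑ i ∈ S, (d i : ℝ))⁻¹) with hf
  set M : ℝ := (Finset.univ.powerset).sup' ⟨∅, Finset.empty_mem_powerset _⟩ f with hM
  have hM0 : 0 ≤ M := by
    have h := Finset.le_sup' f (Finset.empty_mem_powerset (univ : Finset (Fin m)))
    have hfe : f ∅ = 0 := by simp [hf]
    rw [hfe] at h
    exact h
  -- key and sets
  set key : Fin m → Lex (ℝ × Fin m) := fun i => toLex (a i, i) with hkeydef
  set Sf : Fin m → Finset (Fin m) := fun i => univ.filter (fun j => key i ≤ key j) with hSf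
  set F : Fin m → ℕ := fun i => ∑ j ∈ Sf i, d j with hF
  set D : ℕ := ∑ i, d i with hD
  have hmem : ∀ i, i ∈ Sf i := fun i => by simp [hSf]
  have haij : ∀ i j, j ∈ Sf i → a i ≤ a j := by
    intro i j hj
    simp only [hSf, mem_filter, mem_univ, true_and, hkeydef] at hj
    rcases Prod.Lex.le_iff.1 hj with h | h
    · exact le_of_lt h
    · exact le_of_eq h.1
  have hdF : ∀ i, d i ≤ F i := fun i =>
    Finset.single_le_sum (fun j _ => Nat.zero_le _) (hmem i)
  have hFpos : ∀ i, 0 < F i := fun i => lt_of_lt_of_le (hd i) (hdF i)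
  have hFD : ∀ i, F i ≤ D := fun i =>
    Finset.sum_le_sum_of_subset (Finset.subset_univ _)
  have hD1 : 1 ≤ D := le_trans (hd ⟨0, hm⟩) (le_trans (hdF _) (hFD _))
  -- lower bound on M
  have hMlow : ∀ i, (F i : ℝ) * a i ≤ M := by
    intro i
    have hle : f (Sf i) ≤ M := Finset.le_sup' f (Finset.mem_powerset.2 (subset_univ _))
    refine le_trans ?_ hle
    have hsum : ∑ j ∈ Sf i, (d j : ℝ) = (F i : ℝ) := by rw [hF]; push_cast; rfl
    have hFpos' : (0:ℝ) < (F i : ℝ) := by exact_mod_cast hFpos i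
    have hprod : (a i) ^ (F i) ≤ ∏ j ∈ Sf i, a j ^ d j := by
      rw [hF, ← Finset.prod_pow_eq_pow_sum]
      exact Finset.prod_le_prod (fun j _ => pow_nonneg (ha i) _)
        (fun j hj => pow_le_pow_left₀ (ha i) (haij i j hj) _)
    have hroot : a i ≤ (∏ j ∈ Sf i, a j ^ d j) ^ ((F i : ℝ)⁻¹) := by
      have h2 : ((a i) ^ (F i)) ^ ((F i:ℝ)⁻¹) ≤ (∏ j ∈ Sf i, a j ^ d j) ^ ((F i:ℝ)⁻¹) :=
        Real.rpow_le_rpow (pow_nonneg (ha i) _) hprod (by positivity)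
      calc a i = ((a i) ^ (F i : ℕ)) ^ ((F i:ℝ)⁻¹) := by
            rw [← Real.rpow_natCast (a i) (F i), ← Real.rpow_mul (ha i),
              mul_inv_cancel₀ (ne_of_gt hFpos'), Real.rpow_one]
        _ ≤ _ := h2
    have : f (Sf i) = (F i : ℝ) * (∏ j ∈ Sf i, a j ^ d j) ^ ((F i : ℝ)⁻¹) := by
      rw [hf]; simp only []; rw [hsum]
    rw [this]
    exact mul_le_mul_of_nonneg_left hroot (le_of_lt hFpos')
  -- key comparison
  have hkeyne : ∀ i j : Fin m, i ≠ j → key i ≠ key j := by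
    intro i j hij h
    apply hij
    have := congrArg (fun x => (ofLex x).2) h
    simpa [hkeydef] using this
  have hstepF : ∀ i j : Fin m, key i < key j → F j + d i ≤ F i := by
    intro i j hlt
    have hnot : i ∉ Sf j := by
      simp only [hSf, mem_filter, mem_univ, true_and]
      exact fun h => absurd (lt_of_lt_of_le hlt h) (lt_irrefl _)
    have hsub : insert i (Sf j) ⊆ Sf i := by
      intro k hk
      rcases Finset.mem_insert.1 hk with rfl | hk
      · exact hmem _
      · simp only [hSf, mem_filter, mem_univ, true_and] at hk ⊢
        exact le_trans (le_of_lt hlt) hk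
    have h1 : ∑ k ∈ insert i (Sf j), d k ≤ F i :=
      Finset.sum_le_sum_of_subset hsub
    rw [Finset.sum_insert hnot] at h1
    have h2 : ∑ k ∈ Sf j, d k = F j := rfl
    omega
  -- disjoint intervals
  set g : Fin m → Finset ℕ := fun i => Finset.Ioc (F i - d i) (F i) with hg
  have hdisj : ((univ : Finset (Fin m)) : Set (Fin m)).PairwiseDisjoint g := by
    intro i _ j _ hij
    have hne := hkeyne i j hij
    have key_cases := hne.lt_or_gt
    have main : ∀ p q : Fin m, key p < key q → Disjoint (g p) (g q) := by
      intro p q hlt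
      have h1 := hstepF p q hlt
      rw [Finset.disjoint_left]
      intro t htp htq
      simp only [hg, Finset.mem_Ioc] at htp htq
      omega
    rcases key_cases with h | h
    · exact main i j h
    · exact (main j i h).symm
  -- harmonic bound
  have hstep : ∀ i : Fin m, (d i : ℝ) / (F i : ℝ) ≤ ∑ t ∈ g i, (1:ℝ)/t := by
    intro i
    have hcard : (g i).card = d i := by
      rw [hg]; simp only []; rw [Nat.card_Ioc]
      have := hdF i; omega
    have h1 : ∑ t ∈ g i, (1:ℝ)/(F i : ℝ) ≤ ∑ t ∈ g i, (1:ℝ)/t := by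
      refine Finset.sum_le_sum fun t ht => ?_
      simp only [hg, Finset.mem_Ioc] at ht
      have ht1 : 1 ≤ t := by omega
      have ht2 : (t:ℝ) ≤ (F i : ℝ) := by exact_mod_cast ht.2
      exact one_div_le_one_div_of_le (by exact_mod_cast ht1) ht2
    calc (d i : ℝ) / (F i : ℝ) = ∑ t ∈ g i, (1:ℝ)/(F i : ℝ) := by
          rw [Finset.sum_const, hcard, nsmul_eq_mul]; ring
      _ ≤ _ := h1
  have hsub2 : univ.biUnion g ⊆ Finset.Icc 1 D := by
    intro t ht
    rcases Finset.mem_biUnion.1 ht with ⟨i, _, hti⟩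
    simp only [hg, Finset.mem_Ioc] at hti
    have := hFD i
    simp only [Finset.mem_Icc]
    omega
  have hH : ∑ i, (d i : ℝ) / (F i : ℝ) ≤ ∑ t ∈ Finset.Icc 1 D, (1:ℝ)/t := by
    calc ∑ i, (d i : ℝ) / (F i : ℝ) ≤ ∑ i, ∑ t ∈ g i, (1:ℝ)/t :=
          Finset.sum_le_sum fun i _ => hstep i
      _ = ∑ t ∈ univ.biUnion g, (1:ℝ)/t := (Finset.sum_biUnion hdisj).symm
      _ ≤ ∑ t ∈ Finset.Icc 1 D, (1:ℝ)/t :=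
          Finset.sum_le_sum_of_subset_of_nonneg hsub2 (fun t _ _ => by positivity)
  have hharm : ∑ t ∈ Finset.Icc 1 D, (1:ℝ)/t ≤ 1 + Real.log D := by
    have heq : ∑ t ∈ Finset.Icc 1 D, (1:ℝ)/t = (harmonic D : ℝ) := by
      rw [← Finset.Ico_add_one_right_eq_Icc, Finset.sum_Ico_eq_sum_range, harmonic]
      push_cast
      refine Finset.sum_congr (by simp) fun k _ => ?_
      rw [one_div, add_comm]
    rw [heq]
    exact harmonic_le_one_add_log D
  -- ceiling bound
  have hDr_eq : ∑ i, (d i : ℝ) = (D : ℝ) := by rw [hD]; push_cast; rfl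
  have hceil : 1 + Real.log D ≤ 4 * (⌈Real.logb 2 (2 * ∑ i, (d i : ℝ))⌉ : ℝ) := by
    rw [hDr_eq]
    have hDr : (1:ℝ) ≤ (D:ℝ) := by exact_mod_cast hD1
    have hlog2 : (0:ℝ) < Real.log 2 := Real.log_pos (by norm_num)
    have hlog2' : Real.log 2 < 1 := by
      have := Real.log_two_lt_d9; norm_num at this ⊢; linarith
    have hlogD : 0 ≤ Real.log (D:ℝ) := Real.log_nonneg hDr
    have hlogb : Real.logb 2 (2*(D:ℝ)) = 1 + Real.log (D:ℝ) / Real.log 2 := by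
      rw [Real.logb, Real.log_mul (by norm_num) (by positivity)]
      field_simp
    have h1 : 1 + Real.log (D:ℝ) / Real.log 2 ≤ (⌈Real.logb 2 (2*(D:ℝ))⌉ : ℝ) :=
      le_trans (le_of_eq hlogb.symm) (Int.le_ceil _)
    have h2 : Real.log (D:ℝ) ≤ Real.log (D:ℝ) / Real.log 2 := by
      rw [le_div_iff₀ hlog2]; nlinarith
    linarith
  -- combine
  have hfin : ∑ i, (d i : ℝ) * a i ≤ (∑ i, (d i : ℝ) / (F i : ℝ)) * M := by
    rw [Finset.sum_mul]
    refine Finset.sum_le_sum fun i _ => ?_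
    have hFpos' : (0:ℝ) < (F i : ℝ) := by exact_mod_cast hFpos i
    calc (d i : ℝ) * a i = ((d i : ℝ) / (F i : ℝ)) * ((F i : ℝ) * a i) := by
          field_simp
      _ ≤ ((d i : ℝ) / (F i : ℝ)) * M :=
          mul_le_mul_of_nonneg_left (hMlow i) (by positivity)
  calc ∑ i, (d i : ℝ) * a i ≤ (∑ i, (d i : ℝ) / (F i : ℝ)) * M := hfin
    _ ≤ (1 + Real.log D) * M :=
        mul_le_mul_of_nonneg_right (le_trans hH hharm) hM0
    _ ≤ 4 * (⌈Real.logb 2 (2 * ∑ i, (d i : ℝ))⌉ : ℝ) * M :=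
        mul_le_mul_of_nonneg_right hceil hM0
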